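/- Let F : SL(3,ℝ) → ℂ be continuous, invariant under left translation by SL(3,ℤ), and invariant under right translation by SO(3,ℝ). Then for all k,ℓ ∈ ℤ and all y₁,y₂ > 0, one has [P^{k,0,ℓ}F](a_{y₁,y₂}) = [P^{k,0,−ℓ}F](a_{y₁,y₂}) = [P^{−k,0,ℓ}F](a_{y₁,y₂}). -/

import Mathlib

open scoped Real
open MeasureTheory intervalIntegral

noncomputable section

abbrev SL3 := Matrix.SpecialLinearGroup (Fin 3) ℝ

/-- The subspace topology on `SL(3,ℝ)`, induced from the space of matrices. -/
instance : TopologicalSpace SL3 :=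
  TopologicalSpace.induced (fun g : SL3 => (g : Matrix (Fin 3) (Fin 3) ℝ)) inferInstance

/-- The upper-triangular unipotent matrix `u(x,y,z)` in `SL(3,ℝ)`. -/
def uMat (x y z : ℝ) : SL3 :=
  ⟨!![1, x, z; 0, 1, y; 0, 0, 1], by
    simp [Matrix.det_fin_three, Matrix.vecHead, Matrix.vecTail]⟩

/-- The diagonal matrix `a_{y₁,y₂}` as an element of `SL(3,ℝ)` (for `y₁, y₂ > 0`). -/
def aSL (y₁ y₂ : ℝ) (h₁ : 0 < y₁) (h₂ : 0 < y₂) : SL3 :=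
  ⟨!![y₁ ^ ((2:ℝ)/3) * y₂ ^ ((1:ℝ)/3), 0, 0;
     0, y₁ ^ (-(1:ℝ)/3) * y₂ ^ ((1:ℝ)/3), 0;
     0, 0, y₁ ^ (-(1:ℝ)/3) * y₂ ^ (-(2:ℝ)/3)], by
    simp [Matrix.det_fin_three, Matrix.vecHead, Matrix.vecTail]
    have e1 : y₁ ^ ((2:ℝ)/3) * y₁ ^ ((-1)/3 : ℝ) * y₁ ^ ((-1)/3 : ℝ) = 1 := by
      rw [← Real.rpow_add h₁, ← Real.rpow_add h₁]; norm_num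
    have e2 : y₂ ^ ((3:ℝ))⁻¹ * y₂ ^ ((3:ℝ))⁻¹ * y₂ ^ ((-2)/3 : ℝ) = 1 := by
      rw [← Real.rpow_add h₂, ← Real.rpow_add h₂]; norm_num
    linear_combination (y₂ ^ ((3:ℝ))⁻¹ * y₂ ^ ((3:ℝ))⁻¹ * y₂ ^ ((-2)/3 : ℝ)) * e1 + e2⟩

/-- The Fourier coefficient
`[P^{k,0,ℓ}F](g) = ∫₀¹∫₀¹∫₀¹ F(u(x,y,z)g) e^{-2πi(kx+ℓy)} dx dy dz`. -/
def Pk0l (F : SL3 → ℂ) (k l : ℤ) (g : SL3) : ℂ :=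
  ∫ z in (0:ℝ)..1, ∫ y in (0:ℝ)..1, ∫ x in (0:ℝ)..1,
    F (uMat x y z * g) * Complex.exp (-2 * π * Complex.I * (k * x + l * y))

lemma swap01 {f : ℝ → ℝ → ℂ} (hf : Continuous fun p : ℝ × ℝ => f p.1 p.2) :
    ∫ z in (0:ℝ)..1, ∫ y in (0:ℝ)..1, f z y = ∫ y in (0:ℝ)..1, ∫ z in (0:ℝ)..1, f z y := by
  rw [intervalIntegral.integral_of_le zero_le_one, intervalIntegral.integral_of_le zero_le_one]
  simp_rw [intervalIntegral.integral_of_le zero_le_one]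
  apply MeasureTheory.integral_integral_swap
  rw [Measure.prod_restrict]
  apply MeasureTheory.IntegrableOn.mono_set (t := Set.Icc (0:ℝ) 1 ×ˢ Set.Icc (0:ℝ) 1)
  · rw [← Measure.volume_eq_prod]
    exact hf.continuousOn.integrableOn_compact (isCompact_Icc.prod isCompact_Icc)
  · exact Set.prod_mono Set.Ioc_subset_Icc_self Set.Ioc_subset_Icc_self


lemma expAdd (n : ℤ) (t : ℂ) :
    Complex.exp (-2 * π * Complex.I * (t + n)) = Complex.exp (-2 * π * Complex.I * t) := by
  rw [mul_add, Complex.exp_add,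
    show (-2 * ↑π * Complex.I * (n:ℂ)) = (-n : ℤ) * (2 * ↑π * Complex.I) by push_cast; ring,
    Complex.exp_int_mul_two_pi_mul_I, mul_one]

lemma abstract_part1 (G : ℝ → ℝ → ℝ → ℂ)
    (g1 : ∀ x y z : ℝ, G x (-y) (-z) = G x y z)
    (g3 : ∀ x y z : ℝ, G x (y + 1) z = G x y z)
    (g4 : ∀ x y z : ℝ, G x y (z + 1) = G x y z)
    (k l : ℤ) :
    (∫ z in (0:ℝ)..1, ∫ y in (0:ℝ)..1, ∫ x in (0:ℝ)..1,
      G x y z * Complex.exp (-2 * π * Complex.I * (k * x + l * y)))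
    = ∫ z in (0:ℝ)..1, ∫ y in (0:ℝ)..1, ∫ x in (0:ℝ)..1,
      G x y z * Complex.exp (-2 * π * Complex.I * (k * x + (-l : ℤ) * y)) := by
  set Ψ : ℝ → ℂ := fun z => ∫ y in (0:ℝ)..1, ∫ x in (0:ℝ)..1,
      G x y z * Complex.exp (-2 * π * Complex.I * (k * x - l * y)) with hΨ
  calc
    (∫ z in (0:ℝ)..1, ∫ y in (0:ℝ)..1, ∫ x in (0:ℝ)..1,
      G x y z * Complex.exp (-2 * π * Complex.I * (k * x + l * y)))
      = ∫ z in (0:ℝ)..1, Ψ (-z) := by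
        refine intervalIntegral.integral_congr fun z _ => ?_
        set f : ℝ → ℂ := fun y => ∫ x in (0:ℝ)..1,
          G x y (-z) * Complex.exp (-2 * π * Complex.I * (k * x - l * y)) with hf
        have e1 : (∫ y in (0:ℝ)..1, ∫ x in (0:ℝ)..1,
            G x y z * Complex.exp (-2 * π * Complex.I * (k * x + l * y)))
            = ∫ y in (0:ℝ)..1, f (-y) := by
          refine intervalIntegral.integral_congr fun y _ => ?_
          simp only [hf]
          refine intervalIntegral.integral_congr fun x _ => ?_
          rw [← g1 x y z]
          congr 2
          push_cast; ring
        have e2 : (∫ y in (0:ℝ)..1, f (-y)) = ∫ y in (-1:ℝ)..0, f y := by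
          simpa using intervalIntegral.integral_comp_neg f (a := 0) (b := 1)
        have e3 : (∫ y in (-1:ℝ)..0, f y) = ∫ y in (0:ℝ)..1, f (y - 1) := by
          rw [intervalIntegral.integral_comp_sub_right f 1]
          norm_num
        have e4 : (∫ y in (0:ℝ)..1, f (y - 1)) = ∫ y in (0:ℝ)..1, f y := by
          refine intervalIntegral.integral_congr fun y _ => ?_
          simp only [hf]
          refine intervalIntegral.integral_congr fun x _ => ?_
          have hg : G x (y - 1) (-z) = G x y (-z) := by
            have := g3 x (y - 1) (-z); rw [sub_add_cancel] at this; exact this.symm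
          rw [hg]
          congr 1
          rw [show (-2 * (π:ℂ) * Complex.I * ((k:ℂ) * (x:ℂ) - (l:ℂ) * ((y - 1 : ℝ) : ℂ)))
              = -2 * π * Complex.I * (((k:ℂ) * x - (l:ℂ) * y) + ((l:ℤ) : ℂ)) by push_cast; ring]
          exact expAdd l _
        rw [e1, e2, e3, e4]
    _ = ∫ z in (-1:ℝ)..0, Ψ z := by
        simpa using intervalIntegral.integral_comp_neg Ψ (a := 0) (b := 1)
    _ = ∫ z in (0:ℝ)..1, Ψ (z - 1) := by
        rw [intervalIntegral.integral_comp_sub_right Ψ 1]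
        norm_num
    _ = ∫ z in (0:ℝ)..1, Ψ z := by
        refine intervalIntegral.integral_congr fun z _ => ?_
        simp only [hΨ]
        refine intervalIntegral.integral_congr fun y _ => ?_
        refine intervalIntegral.integral_congr fun x _ => ?_
        have := g4 x y (z - 1); rw [sub_add_cancel] at this; rw [this]
    _ = ∫ z in (0:ℝ)..1, ∫ y in (0:ℝ)..1, ∫ x in (0:ℝ)..1,
        G x y z * Complex.exp (-2 * π * Complex.I * (k * x + (-l : ℤ) * y)) := by
        refine intervalIntegral.integral_congr fun z _ => ?_
        simp only [hΨ]
        refine intervalIntegral.integral_congr fun y _ => ?_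
        refine intervalIntegral.integral_congr fun x _ => ?_
        congr 2
        push_cast; ring

lemma uMat_mul (a b c x y z : ℝ) :
    uMat a b c * uMat x y z = uMat (a+x) (b+y) (c + z + a*y) := by
  ext i j
  simp only [Matrix.SpecialLinearGroup.coe_mul]
  fin_cases i <;> fin_cases j <;>
    simp [uMat, Matrix.mul_apply, Fin.sum_univ_three, Matrix.vecHead, Matrix.vecTail] <;> ring

-- integer unipotent in SL(3,ℤ)
def gammaZ (m n p : ℤ) : Matrix.SpecialLinearGroup (Fin 3) ℤ :=
  ⟨!![1, m, p; 0, 1, n; 0, 0, 1], by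
    simp [Matrix.det_fin_three, Matrix.vecHead, Matrix.vecTail]⟩

lemma map_gammaZ (m n p : ℤ) :
    Matrix.SpecialLinearGroup.map (Int.castRingHom ℝ) (gammaZ m n p) = uMat m n p := by
  ext i j
  rw [Matrix.SpecialLinearGroup.map_apply_coe]
  fin_cases i <;> fin_cases j <;>
    simp [gammaZ, uMat, Matrix.SpecialLinearGroup.map, Matrix.vecHead, Matrix.vecTail]

def dR1 : SL3 :=
  ⟨!![1,0,0; 0,-1,0; 0,0,-1], by
    simp [Matrix.det_fin_three, Matrix.vecHead, Matrix.vecTail]⟩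
def dR2 : SL3 :=
  ⟨!![-1,0,0; 0,-1,0; 0,0,1], by
    simp [Matrix.det_fin_three, Matrix.vecHead, Matrix.vecTail]⟩
def dZ1 : Matrix.SpecialLinearGroup (Fin 3) ℤ :=
  ⟨!![1,0,0; 0,-1,0; 0,0,-1], by
    simp [Matrix.det_fin_three, Matrix.vecHead, Matrix.vecTail]⟩
def dZ2 : Matrix.SpecialLinearGroup (Fin 3) ℤ :=
  ⟨!![-1,0,0; 0,-1,0; 0,0,1], by
    simp [Matrix.det_fin_three, Matrix.vecHead, Matrix.vecTail]⟩

lemma map_dZ1 : Matrix.SpecialLinearGroup.map (Int.castRingHom ℝ) dZ1 = dR1 := by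
  ext i j
  rw [Matrix.SpecialLinearGroup.map_apply_coe]
  fin_cases i <;> fin_cases j <;>
    simp [dZ1, dR1, Matrix.SpecialLinearGroup.map, Matrix.vecHead, Matrix.vecTail]

lemma map_dZ2 : Matrix.SpecialLinearGroup.map (Int.castRingHom ℝ) dZ2 = dR2 := by
  ext i j
  rw [Matrix.SpecialLinearGroup.map_apply_coe]
  fin_cases i <;> fin_cases j <;>
    simp [dZ2, dR2, Matrix.SpecialLinearGroup.map, Matrix.vecHead, Matrix.vecTail]

lemma dR1_sq : dR1 * dR1 = 1 := by
  ext i j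
  simp only [Matrix.SpecialLinearGroup.coe_mul]
  fin_cases i <;> fin_cases j <;>
    simp [dR1, Matrix.mul_apply, Fin.sum_univ_three, Matrix.vecHead, Matrix.vecTail,
      Matrix.one_apply]

lemma dR2_sq : dR2 * dR2 = 1 := by
  ext i j
  simp only [Matrix.SpecialLinearGroup.coe_mul]
  fin_cases i <;> fin_cases j <;>
    simp [dR2, Matrix.mul_apply, Fin.sum_univ_three, Matrix.vecHead, Matrix.vecTail,
      Matrix.one_apply]

lemma dR1_so : (dR1 : Matrix (Fin 3) (Fin 3) ℝ) ∈ Matrix.specialOrthogonalGroup (Fin 3) ℝ := by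
  rw [Matrix.mem_specialOrthogonalGroup_iff]
  constructor
  · rw [Matrix.mem_orthogonalGroup_iff]
    ext i j
    fin_cases i <;> fin_cases j <;>
      simp [dR1, Matrix.mul_apply, Fin.sum_univ_three, Matrix.vecHead, Matrix.vecTail,
        Matrix.one_apply, Matrix.star_eq_conjTranspose, Matrix.conjTranspose_apply]
  · exact dR1.2

lemma dR2_so : (dR2 : Matrix (Fin 3) (Fin 3) ℝ) ∈ Matrix.specialOrthogonalGroup (Fin 3) ℝ := by
  rw [Matrix.mem_specialOrthogonalGroup_iff]
  constructor
  · rw [Matrix.mem_orthogonalGroup_iff]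
    ext i j
    fin_cases i <;> fin_cases j <;>
      simp [dR2, Matrix.mul_apply, Fin.sum_univ_three, Matrix.vecHead, Matrix.vecTail,
        Matrix.one_apply, Matrix.star_eq_conjTranspose, Matrix.conjTranspose_apply]
  · exact dR2.2

lemma dR1_uMat (x y z : ℝ) : dR1 * uMat x y z * dR1 = uMat (-x) y (-z) := by
  ext i j
  simp only [Matrix.SpecialLinearGroup.coe_mul]
  fin_cases i <;> fin_cases j <;>
    simp [dR1, uMat, Matrix.mul_apply, Fin.sum_univ_three, Matrix.vecHead, Matrix.vecTail]

lemma dR2_uMat (x y z : ℝ) : dR2 * uMat x y z * dR2 = uMat x (-y) (-z) := by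
  ext i j
  simp only [Matrix.SpecialLinearGroup.coe_mul]
  fin_cases i <;> fin_cases j <;>
    simp [dR2, uMat, Matrix.mul_apply, Fin.sum_univ_three, Matrix.vecHead, Matrix.vecTail]

lemma dR1_aSL (y₁ y₂ : ℝ) (h₁ : 0 < y₁) (h₂ : 0 < y₂) :
    dR1 * aSL y₁ y₂ h₁ h₂ * dR1 = aSL y₁ y₂ h₁ h₂ := by
  ext i j
  simp only [Matrix.SpecialLinearGroup.coe_mul]
  fin_cases i <;> fin_cases j <;>
    simp [dR1, aSL, Matrix.mul_apply, Fin.sum_univ_three, Matrix.vecHead, Matrix.vecTail]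

lemma dR2_aSL (y₁ y₂ : ℝ) (h₁ : 0 < y₁) (h₂ : 0 < y₂) :
    dR2 * aSL y₁ y₂ h₁ h₂ * dR2 = aSL y₁ y₂ h₁ h₂ := by
  ext i j
  simp only [Matrix.SpecialLinearGroup.coe_mul]
  fin_cases i <;> fin_cases j <;>
    simp [dR2, aSL, Matrix.mul_apply, Fin.sum_univ_three, Matrix.vecHead, Matrix.vecTail]

section Flevel
variable (F : SL3 → ℂ)

lemma conj_insert (d u a : SL3) (hdd : d * d = 1) :
    d * (u * a) * d = (d * u * d) * (d * a * d) := by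
  have h : (d * u * d) * (d * a * d) = d * u * ((d * d) * (a * d)) := by group
  rw [h, hdd, one_mul]
  group

variable (hinv : ∀ (γ : Matrix.SpecialLinearGroup (Fin 3) ℤ) (g : SL3),
      F (Matrix.SpecialLinearGroup.map (Int.castRingHom ℝ) γ * g) = F g)

include hinv in
lemma shiftF (m n p : ℤ) (g : SL3) (x y z : ℝ) :
    F (uMat (m + x) (n + y) (p + z + m * y) * g) = F (uMat x y z * g) := by
  have h := hinv (gammaZ m n p) (uMat x y z * g)
  rw [map_gammaZ, ← mul_assoc, uMat_mul] at h
  exact h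

variable (hK : ∀ (g k : SL3), (k : Matrix (Fin 3) (Fin 3) ℝ) ∈ Matrix.specialOrthogonalGroup (Fin 3) ℝ →
      F (g * k) = F g)

include hinv hK in
lemma signF1 (y₁ y₂ : ℝ) (h₁ : 0 < y₁) (h₂ : 0 < y₂) (x y z : ℝ) :
    F (uMat (-x) y (-z) * aSL y₁ y₂ h₁ h₂) = F (uMat x y z * aSL y₁ y₂ h₁ h₂) := by
  have h0 : F (uMat x y z * aSL y₁ y₂ h₁ h₂)
      = F (dR1 * (uMat x y z * aSL y₁ y₂ h₁ h₂)) := by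
    rw [← map_dZ1]; exact (hinv dZ1 _).symm
  have h1 : F (dR1 * (uMat x y z * aSL y₁ y₂ h₁ h₂))
      = F (dR1 * (uMat x y z * aSL y₁ y₂ h₁ h₂) * dR1) := (hK _ dR1 dR1_so).symm
  have h2 : dR1 * (uMat x y z * aSL y₁ y₂ h₁ h₂) * dR1
      = uMat (-x) y (-z) * aSL y₁ y₂ h₁ h₂ := by
    rw [conj_insert _ _ _ dR1_sq, dR1_uMat, dR1_aSL]
  rw [h0, h1, h2]

include hinv hK in
lemma signF2 (y₁ y₂ : ℝ) (h₁ : 0 < y₁) (h₂ : 0 < y₂) (x y z : ℝ) :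
    F (uMat x (-y) (-z) * aSL y₁ y₂ h₁ h₂) = F (uMat x y z * aSL y₁ y₂ h₁ h₂) := by
  have h0 : F (uMat x y z * aSL y₁ y₂ h₁ h₂)
      = F (dR2 * (uMat x y z * aSL y₁ y₂ h₁ h₂)) := by
    rw [← map_dZ2]; exact (hinv dZ2 _).symm
  have h1 : F (dR2 * (uMat x y z * aSL y₁ y₂ h₁ h₂))
      = F (dR2 * (uMat x y z * aSL y₁ y₂ h₁ h₂) * dR2) := (hK _ dR2 dR2_so).symm
  have h2 : dR2 * (uMat x y z * aSL y₁ y₂ h₁ h₂) * dR2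
      = uMat x (-y) (-z) * aSL y₁ y₂ h₁ h₂ := by
    rw [conj_insert _ _ _ dR2_sq, dR2_uMat, dR2_aSL]
  rw [h0, h1, h2]

lemma contG (hcont : Continuous F) (a : SL3) :
    Continuous fun p : ℝ × ℝ × ℝ => F (uMat p.1 p.2.1 p.2.2 * a) := by
  apply hcont.comp
  rw [continuous_induced_rng]
  show Continuous fun p : ℝ × ℝ × ℝ =>
    ((uMat p.1 p.2.1 p.2.2 * a : SL3) : Matrix (Fin 3) (Fin 3) ℝ)
  simp only [Matrix.SpecialLinearGroup.coe_mul]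
  apply continuous_matrix
  intro i j
  simp only [Matrix.mul_apply, Fin.sum_univ_three]
  fin_cases i <;> fin_cases j <;>
    simp [uMat, Matrix.vecHead, Matrix.vecTail] <;> fun_prop

end Flevel

lemma abstract_part2 (G : ℝ → ℝ → ℝ → ℂ)
    (gc : Continuous fun p : ℝ × ℝ × ℝ => G p.1 p.2.1 p.2.2)
    (g2 : ∀ x y z : ℝ, G (-x) y (-z) = G x y z)
    (g4 : ∀ x y z : ℝ, G x y (z + 1) = G x y z)
    (g5 : ∀ x y z : ℝ, G (x + 1) y (z + y) = G x y z)
    (k l : ℤ) :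
    (∫ z in (0:ℝ)..1, ∫ y in (0:ℝ)..1, ∫ x in (0:ℝ)..1,
      G x y z * Complex.exp (-2 * π * Complex.I * (k * x + l * y)))
    = ∫ z in (0:ℝ)..1, ∫ y in (0:ℝ)..1, ∫ x in (0:ℝ)..1,
      G x y z * Complex.exp (-2 * π * Complex.I * ((-k : ℤ) * x + l * y)) := by
  set Φ : ℝ → ℝ → ℂ := fun y w => ∫ x in (0:ℝ)..1,
      G x y w * Complex.exp (-2 * π * Complex.I * ((-k : ℤ) * x + l * y)) with hΦ
  have cΦ : Continuous fun p : ℝ × ℝ => Φ p.1 p.2 := by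
    apply intervalIntegral.continuous_parametric_intervalIntegral_of_continuous'
    show Continuous fun q : (ℝ × ℝ) × ℝ =>
      G q.2 q.1.1 q.1.2 * Complex.exp (-2 * π * Complex.I * ((-k : ℤ) * q.2 + l * q.1.1))
    apply Continuous.mul
    · have hm : Continuous fun q : (ℝ × ℝ) × ℝ => ((q.2, q.1.1, q.1.2) : ℝ × ℝ × ℝ) := by
        fun_prop
      exact gc.comp hm
    · fun_prop
  calc
    (∫ z in (0:ℝ)..1, ∫ y in (0:ℝ)..1, ∫ x in (0:ℝ)..1,
      G x y z * Complex.exp (-2 * π * Complex.I * (k * x + l * y)))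
      = ∫ z in (0:ℝ)..1, ∫ y in (0:ℝ)..1, Φ y (y - z) := by
        refine intervalIntegral.integral_congr fun z _ => ?_
        refine intervalIntegral.integral_congr fun y _ => ?_
        set f : ℝ → ℂ := fun x => G x y (-z) *
          Complex.exp (-2 * π * Complex.I * ((-k : ℤ) * x + l * y)) with hf
        have e1 : (∫ x in (0:ℝ)..1,
            G x y z * Complex.exp (-2 * π * Complex.I * (k * x + l * y)))
            = ∫ x in (0:ℝ)..1, f (-x) := by
          refine intervalIntegral.integral_congr fun x _ => ?_
          simp only [hf]
          rw [← g2 x y z]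
          congr 2
          push_cast; ring
        have e2 : (∫ x in (0:ℝ)..1, f (-x)) = ∫ x in (-1:ℝ)..0, f x := by
          simpa using intervalIntegral.integral_comp_neg f (a := 0) (b := 1)
        have e3 : (∫ x in (-1:ℝ)..0, f x) = ∫ x in (0:ℝ)..1, f (x - 1) := by
          rw [intervalIntegral.integral_comp_sub_right f 1]
          norm_num
        have e4 : (∫ x in (0:ℝ)..1, f (x - 1)) = Φ y (y - z) := by
          simp only [hΦ, hf]
          refine intervalIntegral.integral_congr fun x _ => ?_
          have hg : G (x - 1) y (-z) = G x y (y - z) := by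
            have := g5 (x - 1) y (-z)
            rw [sub_add_cancel] at this
            rw [← this]; ring_nf
          rw [hg]
          congr 1
          rw [show (-2 * (π:ℂ) * Complex.I * (((-k : ℤ) : ℂ) * ((x - 1 : ℝ) : ℂ) + (l:ℂ) * (y:ℝ)))
              = -2 * π * Complex.I * ((((-k : ℤ) : ℂ) * x + (l:ℂ) * y) + ((k:ℤ) : ℂ)) by
            push_cast; ring]
          exact expAdd k _
        rw [e1, e2, e3, e4]
    _ = ∫ y in (0:ℝ)..1, ∫ z in (0:ℝ)..1, Φ y (y - z) := by
        exact swap01 (f := fun z y => Φ y (y - z)) (by fun_prop)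
    _ = ∫ y in (0:ℝ)..1, ∫ z in (0:ℝ)..1, Φ y z := by
        refine intervalIntegral.integral_congr fun y _ => ?_
        rw [intervalIntegral.integral_comp_sub_left (fun w => Φ y w) y]
        have hper : Function.Periodic (fun w => Φ y w) 1 := by
          intro w
          simp only [hΦ]
          refine intervalIntegral.integral_congr fun x _ => ?_
          rw [g4]
        have := hper.intervalIntegral_add_eq (y - 1) 0
        rw [sub_add_cancel] at this
        norm_num at this ⊢
        exact this
    _ = ∫ z in (0:ℝ)..1, ∫ y in (0:ℝ)..1, Φ y z :=
        (swap01 (f := fun z y => Φ y z) (by fun_prop)).symm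
    _ = ∫ z in (0:ℝ)..1, ∫ y in (0:ℝ)..1, ∫ x in (0:ℝ)..1,
        G x y z * Complex.exp (-2 * π * Complex.I * ((-k : ℤ) * x + l * y)) := rfl

theorem statement4 (F : SL3 → ℂ)
    (hcont : Continuous F)
    (hinv : ∀ (γ : Matrix.SpecialLinearGroup (Fin 3) ℤ) (g : SL3),
      F (Matrix.SpecialLinearGroup.map (Int.castRingHom ℝ) γ * g) = F g)
    (hK : ∀ (g k : SL3), (k : Matrix (Fin 3) (Fin 3) ℝ) ∈ Matrix.specialOrthogonalGroup (Fin 3) ℝ →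
      F (g * k) = F g)
    (k l : ℤ) (y₁ y₂ : ℝ) (h₁ : 0 < y₁) (h₂ : 0 < y₂) :
    Pk0l F k l (aSL y₁ y₂ h₁ h₂) = Pk0l F k (-l) (aSL y₁ y₂ h₁ h₂) ∧
    Pk0l F k l (aSL y₁ y₂ h₁ h₂) = Pk0l F (-k) l (aSL y₁ y₂ h₁ h₂) := by
  have g3 : ∀ x y z : ℝ, F (uMat x (y + 1) z * aSL y₁ y₂ h₁ h₂) = F (uMat x y z * aSL y₁ y₂ h₁ h₂) := by
    intro x y z
    simpa [add_comm] using shiftF F hinv 0 1 0 (aSL y₁ y₂ h₁ h₂) x y z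
  have g4 : ∀ x y z : ℝ, F (uMat x y (z + 1) * aSL y₁ y₂ h₁ h₂) = F (uMat x y z * aSL y₁ y₂ h₁ h₂) := by
    intro x y z
    simpa [add_comm] using shiftF F hinv 0 0 1 (aSL y₁ y₂ h₁ h₂) x y z
  have g5 : ∀ x y z : ℝ, F (uMat (x + 1) y (z + y) * aSL y₁ y₂ h₁ h₂) = F (uMat x y z * aSL y₁ y₂ h₁ h₂) := by
    intro x y z
    simpa [add_comm] using shiftF F hinv 1 0 0 (aSL y₁ y₂ h₁ h₂) x y z
  constructor
  · exact abstract_part1 (fun x y z => F (uMat x y z * aSL y₁ y₂ h₁ h₂))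
      (fun x y z => signF2 F hinv hK y₁ y₂ h₁ h₂ x y z) g3 g4 k l
  · exact abstract_part2 (fun x y z => F (uMat x y z * aSL y₁ y₂ h₁ h₂))
      (contG F hcont (aSL y₁ y₂ h₁ h₂))
      (fun x y z => signF1 F hinv hK y₁ y₂ h₁ h₂ x y z) g4 g5 k l
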